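/- Let B be a list of bids sorted descending by bid competitiveness and A a list of asks sorted descending by ask competitiveness (most competitive first). Then the matching M_U = UM(B, A) produced by the uniform-matching procedure is individual-rational and uniform, and for every individual-rational uniform matching M between B and A, Q(M_U) ≥ Q(M). That is, UM outputs an optimal individual-rational-uniform matching. -/

import Mathlib

structure Bid where
  id : ℕ
  timestamp : ℕ
  quantity : ℕ
  price : ℕ
deriving DecidableEq

structure Ask where
  id : ℕ
  timestamp : ℕ
  quantity : ℕ
  price : ℕ
deriving DecidableEq

structure Transaction where
  bid : Bid
  ask : Ask
  quantity : ℕ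
  price : ℕ
deriving DecidableEq

/-- Total traded quantity of a list of transactions. -/
def Qty (M : List Transaction) : ℕ := (M.map Transaction.quantity).sum

/-- Total traded quantity of bid `b` in `M`. -/
def QtyBid (b : Bid) (M : List Transaction) : ℕ :=
  ((M.filter (fun m => m.bid == b)).map Transaction.quantity).sum

/-- Total traded quantity of ask `a` in `M`. -/
def QtyAsk (a : Ask) (M : List Transaction) : ℕ :=
  ((M.filter (fun m => m.ask == a)).map Transaction.quantity).sum

/-- Total traded quantity between bid `b` and ask `a` in `M`. -/
def QtyBidAsk (b : Bid) (a : Ask) (M : List Transaction) : ℕ :=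
  ((M.filter (fun m => m.bid == b && m.ask == a)).map Transaction.quantity).sum

/-- Sum of quantities of a list of bids. -/
def QB (B : List Bid) : ℕ := (B.map Bid.quantity).sum

/-- Sum of quantities of a list of asks. -/
def QA (A : List Ask) : ℕ := (A.map Ask.quantity).sum

/-- `M` is a matching between bids `B` and asks `A`. -/
def Matching (B : List Bid) (A : List Ask) (M : List Transaction) : Prop :=
  (∀ m ∈ M, m.ask.price ≤ m.bid.price) ∧
  (∀ m ∈ M, m.bid ∈ B) ∧
  (∀ m ∈ M, m.ask ∈ A) ∧
  (∀ b ∈ B, QtyBid b M ≤ b.quantity) ∧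
  (∀ a ∈ A, QtyAsk a M ≤ a.quantity)

/-- Individual rationality. -/
def IsIR (M : List Transaction) : Prop :=
  ∀ m ∈ M, m.ask.price ≤ m.price ∧ m.price ≤ m.bid.price

/-- Uniformity: all trade prices equal. -/
def IsUniform (M : List Transaction) : Prop :=
  ∀ m1 ∈ M, ∀ m2 ∈ M, m1.price = m2.price

/-- `b1` is more competitive than `b2`. -/
def MoreCompetitiveBid (b1 b2 : Bid) : Prop :=
  b2.price < b1.price ∨ (b1.price = b2.price ∧ b1.timestamp < b2.timestamp)

/-- `a1` is more competitive than `a2`. -/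
def MoreCompetitiveAsk (a1 a2 : Ask) : Prop :=
  a1.price < a2.price ∨ (a1.price = a2.price ∧ a1.timestamp < a2.timestamp)

def FairOnBids (B : List Bid) (M : List Transaction) : Prop :=
  ∀ b1 ∈ B, ∀ b2 ∈ B, MoreCompetitiveBid b1 b2 → 1 ≤ QtyBid b2 M →
    QtyBid b1 M = b1.quantity

def FairOnAsks (A : List Ask) (M : List Transaction) : Prop :=
  ∀ a1 ∈ A, ∀ a2 ∈ A, MoreCompetitiveAsk a1 a2 → 1 ≤ QtyAsk a2 M →
    QtyAsk a1 M = a1.quantity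

def IsFair (B : List Bid) (A : List Ask) (M : List Transaction) : Prop :=
  FairOnBids B M ∧ FairOnAsks A M

/-- "at least as competitive as" order on bids (for sorting, most competitive first). -/
def BidGE (b1 b2 : Bid) : Prop := ¬ MoreCompetitiveBid b2 b1

/-- "at least as competitive as" order on asks (for sorting, most competitive first). -/
def AskGE (a1 a2 : Ask) : Prop := ¬ MoreCompetitiveAsk a2 a1

/-- The uniform-matching recursion `f_u(B, A, t_b, t_a)`. -/
def fu : List Bid → List Ask → ℕ → ℕ → List Transaction
  | [], _, _, _ => []
  | _ :: _, [], _, _ => []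
  | b :: B', a :: A', tb, ta =>
    if b.price < a.price then []
    else if a.quantity - ta = b.quantity - tb then
      ⟨b, a, b.quantity - tb, a.price⟩ :: fu B' A' 0 0
    else if b.quantity - tb < a.quantity - ta then
      ⟨b, a, b.quantity - tb, a.price⟩ :: fu B' (a :: A') 0 (ta + (b.quantity - tb))
    else
      ⟨b, a, a.quantity - ta, a.price⟩ :: fu (b :: B') A' (tb + (a.quantity - ta)) 0
termination_by B A _ _ => B.length + A.length
decreasing_by all_goals (simp; try omega)

/-- Trade price of the last transaction (0 if none). -/
def lastPrice (M : List Transaction) : ℕ := (M.getLast?.map Transaction.price).getD 0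

/-- Replace all trade prices in `M` by `p`. -/
def replacePrices (M : List Transaction) (p : ℕ) : List Transaction :=
  M.map (fun m => { m with price := p })

/-- The uniform matching procedure. -/
def UM (B : List Bid) (A : List Ask) : List Transaction :=
  replacePrices (fu B A 0 0) (lastPrice (fu B A 0 0))

-- basic lemmas
theorem bidGE_price {b1 b2 : Bid} (h : BidGE b1 b2) : b2.price ≤ b1.price := by
  unfold BidGE MoreCompetitiveBid at h; push_neg at h; omega

theorem askGE_price {a1 a2 : Ask} (h : AskGE a1 a2) : a1.price ≤ a2.price := by
  unfold AskGE MoreCompetitiveAsk at h; push_neg at h; omega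

@[simp] theorem QtyBid_nil (b : Bid) : QtyBid b [] = 0 := rfl
@[simp] theorem QtyAsk_nil (a : Ask) : QtyAsk a [] = 0 := rfl
@[simp] theorem Qty_nil : Qty [] = 0 := rfl
@[simp] theorem Qty_cons (t : Transaction) (M : List Transaction) :
    Qty (t :: M) = t.quantity + Qty M := by simp [Qty]

theorem QtyBid_cons (b : Bid) (t : Transaction) (M : List Transaction) :
    QtyBid b (t :: M) = (if t.bid = b then t.quantity else 0) + QtyBid b M := by
  simp only [QtyBid, List.filter_cons]
  split <;> rename_i h <;> simp_all

theorem QtyAsk_cons (a : Ask) (t : Transaction) (M : List Transaction) :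
    QtyAsk a (t :: M) = (if t.ask = a then t.quantity else 0) + QtyAsk a M := by
  simp only [QtyAsk, List.filter_cons]
  split <;> rename_i h <;> simp_all

theorem QtyBid_eq_zero {b : Bid} {M : List Transaction} (h : ∀ m ∈ M, m.bid ≠ b) :
    QtyBid b M = 0 := by
  induction M with
  | nil => rfl
  | cons t M ih => rw [QtyBid_cons]; simp [h t (by simp), ih (fun m hm => h m (by simp [hm]))]

theorem QtyAsk_eq_zero {a : Ask} {M : List Transaction} (h : ∀ m ∈ M, m.ask ≠ a) :
    QtyAsk a M = 0 := by
  induction M with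
  | nil => rfl
  | cons t M ih => rw [QtyAsk_cons]; simp [h t (by simp), ih (fun m hm => h m (by simp [hm]))]
theorem mem_fu : ∀ B A tb ta, ∀ m ∈ fu B A tb ta,
    m.bid ∈ B ∧ m.ask ∈ A ∧ m.price = m.ask.price ∧ m.ask.price ≤ m.bid.price := by
  intro B A tb ta
  induction B, A, tb, ta using fu.induct with
  | case1 => simp [fu]
  | case2 => simp [fu]
  | case3 b B' a A' tb ta h => simp [fu, h]
  | case4 b B' a A' tb ta h1 h2 ih =>
    intro m hm
    rw [fu, if_neg h1, if_pos h2] at hm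
    rcases List.mem_cons.mp hm with rfl | hm
    · simp; omega
    · obtain ⟨h3, h4, h5, h6⟩ := ih m hm
      exact ⟨by simp [h3], by simp [h4], h5, h6⟩
  | case5 b B' a A' tb ta h1 h2 h2' ih =>
    intro m hm
    rw [fu, if_neg h1, if_neg h2, if_pos h2'] at hm
    rcases List.mem_cons.mp hm with rfl | hm
    · simp; omega
    · obtain ⟨h3, h4, h5, h6⟩ := ih m hm
      exact ⟨by simp [h3], h4, h5, h6⟩
  | case6 b B' a A' tb ta h1 h2 h2' ih =>
    intro m hm
    rw [fu, if_neg h1, if_neg h2, if_neg h2'] at hm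
    rcases List.mem_cons.mp hm with rfl | hm
    · simp; omega
    · obtain ⟨h3, h4, h5, h6⟩ := ih m hm
      exact ⟨h3, by simp [h4], h5, h6⟩
theorem fu_qtyBid : ∀ B A tb ta, B.Nodup →
    (∀ b' ∈ B, QtyBid b' (fu B A tb ta) ≤ b'.quantity) ∧
    (∀ b B', B = b :: B' → QtyBid b (fu B A tb ta) ≤ b.quantity - tb) := by
  intro B A tb ta
  induction B, A, tb, ta using fu.induct with
  | case1 => intro _; simp [fu]
  | case2 => intro _; simp [fu]
  | case3 b B' a A' tb ta h => intro _; simp [fu, h]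
  | case4 b B' a A' tb ta h1 h2 ih =>
    intro hnd
    have hnd' := hnd.of_cons
    have hb : b ∉ B' := (List.nodup_cons.mp hnd).1
    have hz : QtyBid b (fu B' A' 0 0) = 0 :=
      QtyBid_eq_zero (fun m hm => fun he => hb (he ▸ (mem_fu _ _ _ _ m hm).1))
    have hkey : ∀ b'', QtyBid b'' (fu (b :: B') (a :: A') tb ta) =
        (if b = b'' then b.quantity - tb else 0) + QtyBid b'' (fu B' A' 0 0) := by
      intro b''; rw [fu, if_neg h1, if_pos h2, QtyBid_cons]
    constructor
    · intro b' hb'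
      rcases List.mem_cons.mp hb' with rfl | hb'
      · rw [hkey, hz]; simp; try omega
      · rw [hkey]
        have : ¬ b = b' := fun he => hb (he ▸ hb')
        rw [if_neg this]
        simpa using (ih hnd').1 b' hb'
    · rintro b0 B0 he
      injection he with he1 he2
      subst he1; subst he2
      rw [hkey, hz, if_pos rfl]; omega
  | case5 b B' a A' tb ta h1 h2 h2' ih =>
    intro hnd
    have hnd' := hnd.of_cons
    have hb : b ∉ B' := (List.nodup_cons.mp hnd).1
    have hz : QtyBid b (fu B' (a :: A') 0 (ta + (b.quantity - tb))) = 0 :=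
      QtyBid_eq_zero (fun m hm => fun he => hb (he ▸ (mem_fu _ _ _ _ m hm).1))
    have hkey : ∀ b'', QtyBid b'' (fu (b :: B') (a :: A') tb ta) =
        (if b = b'' then b.quantity - tb else 0) +
          QtyBid b'' (fu B' (a :: A') 0 (ta + (b.quantity - tb))) := by
      intro b''; rw [fu, if_neg h1, if_neg h2, if_pos h2', QtyBid_cons]
    constructor
    · intro b' hb'
      rcases List.mem_cons.mp hb' with rfl | hb'
      · rw [hkey, hz]; simp; try omega
      · rw [hkey]
        have : ¬ b = b' := fun he => hb (he ▸ hb')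
        rw [if_neg this]
        simpa using (ih hnd').1 b' hb'
    · rintro b0 B0 he
      injection he with he1 he2
      subst he1; subst he2
      rw [hkey, hz, if_pos rfl]; omega
  | case6 b B' a A' tb ta h1 h2 h2' ih =>
    intro hnd
    have hb : b ∉ B' := (List.nodup_cons.mp hnd).1
    have hkey : ∀ b'', QtyBid b'' (fu (b :: B') (a :: A') tb ta) =
        (if b = b'' then a.quantity - ta else 0) +
          QtyBid b'' (fu (b :: B') A' (tb + (a.quantity - ta)) 0) := by
      intro b''; rw [fu, if_neg h1, if_neg h2, if_neg h2', QtyBid_cons]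
    have hhead := (ih hnd).2 b B' rfl
    constructor
    · intro b' hb'
      rcases List.mem_cons.mp hb' with rfl | hb'
      · rw [hkey, if_pos rfl]; omega
      · rw [hkey]
        have : ¬ b = b' := fun he => hb (he ▸ hb')
        rw [if_neg this]
        simpa using (ih hnd).1 b' (by simp [hb'])
    · rintro b0 B0 he
      injection he with he1 he2
      subst he1; subst he2
      rw [hkey, if_pos rfl]
      omega
theorem fu_qtyAsk : ∀ B A tb ta, A.Nodup →
    (∀ a' ∈ A, QtyAsk a' (fu B A tb ta) ≤ a'.quantity) ∧
    (∀ a A', A = a :: A' → QtyAsk a (fu B A tb ta) ≤ a.quantity - ta) := by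
  intro B A tb ta
  induction B, A, tb, ta using fu.induct with
  | case1 => intro _; simp [fu]
  | case2 => intro _; simp [fu]
  | case3 b B' a A' tb ta h => intro _; simp [fu, h]
  | case4 b B' a A' tb ta h1 h2 ih =>
    intro hnd
    have hnd' := hnd.of_cons
    have ha : a ∉ A' := (List.nodup_cons.mp hnd).1
    have hz : QtyAsk a (fu B' A' 0 0) = 0 :=
      QtyAsk_eq_zero (fun m hm => fun he => ha (he ▸ (mem_fu _ _ _ _ m hm).2.1))
    have hkey : ∀ a'', QtyAsk a'' (fu (b :: B') (a :: A') tb ta) =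
        (if a = a'' then b.quantity - tb else 0) + QtyAsk a'' (fu B' A' 0 0) := by
      intro a''; rw [fu, if_neg h1, if_pos h2, QtyAsk_cons]
    constructor
    · intro a' ha'
      rcases List.mem_cons.mp ha' with rfl | ha'
      · rw [hkey, hz, if_pos rfl]; omega
      · rw [hkey]
        have : ¬ a = a' := fun he => ha (he ▸ ha')
        rw [if_neg this]
        simpa using (ih hnd').1 a' ha'
    · rintro a0 A0 he
      injection he with he1 he2
      subst he1; subst he2
      rw [hkey, hz, if_pos rfl]; omega
  | case5 b B' a A' tb ta h1 h2 h2' ih =>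
    intro hnd
    have ha : a ∉ A' := (List.nodup_cons.mp hnd).1
    have hkey : ∀ a'', QtyAsk a'' (fu (b :: B') (a :: A') tb ta) =
        (if a = a'' then b.quantity - tb else 0) +
          QtyAsk a'' (fu B' (a :: A') 0 (ta + (b.quantity - tb))) := by
      intro a''; rw [fu, if_neg h1, if_neg h2, if_pos h2', QtyAsk_cons]
    have hhead := (ih hnd).2 a A' rfl
    constructor
    · intro a' ha'
      rcases List.mem_cons.mp ha' with rfl | ha'
      · rw [hkey, if_pos rfl]; omega
      · rw [hkey]
        have : ¬ a = a' := fun he => ha (he ▸ ha')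
        rw [if_neg this]
        simpa using (ih hnd).1 a' (by simp [ha'])
    · rintro a0 A0 he
      injection he with he1 he2
      subst he1; subst he2
      rw [hkey, if_pos rfl]
      omega
  | case6 b B' a A' tb ta h1 h2 h2' ih =>
    intro hnd
    have hnd' := hnd.of_cons
    have ha : a ∉ A' := (List.nodup_cons.mp hnd).1
    have hz : QtyAsk a (fu (b :: B') A' (tb + (a.quantity - ta)) 0) = 0 :=
      QtyAsk_eq_zero (fun m hm => fun he => ha (he ▸ (mem_fu _ _ _ _ m hm).2.1))
    have hkey : ∀ a'', QtyAsk a'' (fu (b :: B') (a :: A') tb ta) =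
        (if a = a'' then a.quantity - ta else 0) +
          QtyAsk a'' (fu (b :: B') A' (tb + (a.quantity - ta)) 0) := by
      intro a''; rw [fu, if_neg h1, if_neg h2, if_neg h2', QtyAsk_cons]
    constructor
    · intro a' ha'
      rcases List.mem_cons.mp ha' with rfl | ha'
      · rw [hkey, hz, if_pos rfl]; omega
      · rw [hkey]
        have : ¬ a = a' := fun he => ha (he ▸ ha')
        rw [if_neg this]
        simpa using (ih hnd').1 a' ha'
    · rintro a0 A0 he
      injection he with he1 he2
      subst he1; subst he2
      rw [hkey, hz, if_pos rfl]; omega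
theorem lastPrice_cons_cons (t t' : Transaction) (M : List Transaction) :
    lastPrice (t :: t' :: M) = lastPrice (t' :: M) := by
  simp [lastPrice, List.getLast?_cons_cons]

@[simp] theorem lastPrice_singleton (t : Transaction) : lastPrice [t] = t.price := rfl

theorem lastPrice_cons (t : Transaction) (M : List Transaction) (h : M ≠ []) :
    lastPrice (t :: M) = lastPrice M := by
  cases M with
  | nil => simp at h
  | cons t' M' => exact lastPrice_cons_cons t t' M'

theorem exists_last {M : List Transaction} (h : M ≠ []) :
    ∃ t ∈ M, lastPrice M = t.price := by
  refine ⟨M.getLast h, List.getLast_mem h, ?_⟩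
  simp [lastPrice, List.getLast?_eq_getLast h]

theorem fu_last : ∀ B A tb ta, List.Pairwise BidGE B → List.Pairwise AskGE A →
    ∀ m ∈ fu B A tb ta,
      m.ask.price ≤ lastPrice (fu B A tb ta) ∧ lastPrice (fu B A tb ta) ≤ m.bid.price := by
  intro B A tb ta
  induction B, A, tb, ta using fu.induct with
  | case1 => simp [fu]
  | case2 => simp [fu]
  | case3 b B' a A' tb ta h => simp [fu, h]
  | case4 b B' a A' tb ta h1 h2 ih =>
    intro hsB hsA m hm
    have heq : fu (b :: B') (a :: A') tb ta =
        ⟨b, a, b.quantity - tb, a.price⟩ :: fu B' A' 0 0 := by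
      rw [fu, if_neg h1, if_pos h2]
    rw [heq] at hm ⊢
    rcases eq_or_ne (fu B' A' 0 0) [] with hnil | hnil
    · rw [hnil] at hm ⊢
      simp at hm; subst hm
      simp; omega
    · rw [lastPrice_cons _ _ hnil]
      obtain ⟨t, htm, htp⟩ := exists_last hnil
      obtain ⟨htb, hta, htpa, htab⟩ := mem_fu _ _ _ _ t htm
      rcases List.mem_cons.mp hm with rfl | hm
      · constructor
        · -- a.price ≤ lastPrice = t.ask.price, t.ask ∈ A'
          rw [htp, htpa]
          exact askGE_price ((List.pairwise_cons.mp hsA).1 t.ask hta)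
        · rw [htp, htpa]
          exact le_trans htab (bidGE_price ((List.pairwise_cons.mp hsB).1 t.bid htb))
      · exact ih (List.pairwise_cons.mp hsB).2 (List.pairwise_cons.mp hsA).2 m hm
  | case5 b B' a A' tb ta h1 h2 h2' ih =>
    intro hsB hsA m hm
    have heq : fu (b :: B') (a :: A') tb ta =
        ⟨b, a, b.quantity - tb, a.price⟩ :: fu B' (a :: A') 0 (ta + (b.quantity - tb)) := by
      rw [fu, if_neg h1, if_neg h2, if_pos h2']
    rw [heq] at hm ⊢
    set L := fu B' (a :: A') 0 (ta + (b.quantity - tb)) with hL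
    rcases eq_or_ne L [] with hnil | hnil
    · rw [hnil] at hm ⊢
      simp at hm; subst hm
      simp; omega
    · rw [lastPrice_cons _ _ hnil]
      obtain ⟨t, htm, htp⟩ := exists_last hnil
      obtain ⟨htb, hta, htpa, htab⟩ := mem_fu _ _ _ _ t htm
      rcases List.mem_cons.mp hm with rfl | hm
      · constructor
        · rw [htp, htpa]
          rcases List.mem_cons.mp hta with he | hta'
          · rw [he]
          · exact askGE_price ((List.pairwise_cons.mp hsA).1 t.ask hta')
        · rw [htp, htpa]
          exact le_trans htab (bidGE_price ((List.pairwise_cons.mp hsB).1 t.bid htb))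
      · exact ih (List.pairwise_cons.mp hsB).2 hsA m hm
  | case6 b B' a A' tb ta h1 h2 h2' ih =>
    intro hsB hsA m hm
    have heq : fu (b :: B') (a :: A') tb ta =
        ⟨b, a, a.quantity - ta, a.price⟩ :: fu (b :: B') A' (tb + (a.quantity - ta)) 0 := by
      rw [fu, if_neg h1, if_neg h2, if_neg h2']
    rw [heq] at hm ⊢
    set L := fu (b :: B') A' (tb + (a.quantity - ta)) 0 with hL
    rcases eq_or_ne L [] with hnil | hnil
    · rw [hnil] at hm ⊢
      simp at hm; subst hm
      simp; omega
    · rw [lastPrice_cons _ _ hnil]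
      obtain ⟨t, htm, htp⟩ := exists_last hnil
      obtain ⟨htb, hta, htpa, htab⟩ := mem_fu _ _ _ _ t htm
      rcases List.mem_cons.mp hm with rfl | hm
      · constructor
        · rw [htp, htpa]
          exact askGE_price ((List.pairwise_cons.mp hsA).1 t.ask hta)
        · rw [htp, htpa]
          refine le_trans htab ?_
          rcases List.mem_cons.mp htb with he | htb'
          · rw [he]
          · exact bidGE_price ((List.pairwise_cons.mp hsB).1 t.bid htb')
      · exact ih hsB (List.pairwise_cons.mp hsA).2 m hm
@[simp] theorem QB_nil : QB [] = 0 := rfl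
@[simp] theorem QB_cons (b : Bid) (l : List Bid) : QB (b :: l) = b.quantity + QB l := by
  simp [QB]
@[simp] theorem QA_nil : QA [] = 0 := rfl
@[simp] theorem QA_cons (a : Ask) (l : List Ask) : QA (a :: l) = a.quantity + QA l := by
  simp [QA]

theorem fu_key : ∀ B A tb ta, ∀ n m : ℕ,
    (∀ b ∈ B.take n, ∀ a ∈ A.take m, a.price ≤ b.price) →
    min (QB (B.take n) - tb) (QA (A.take m) - ta) ≤ Qty (fu B A tb ta) := by
  intro B A tb ta
  induction B, A, tb, ta using fu.induct with
  | case1 A tb ta => intro n m h; simp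
  | case2 b B' tb ta => intro n m h; cases n <;> simp [fu]
  | case3 b B' a A' tb ta h1 =>
    intro n m hc
    cases n with
    | zero => simp
    | succ n' =>
      cases m with
      | zero => simp
      | succ m' =>
        have := hc b (by simp) a (by simp)
        omega
  | case4 b B' a A' tb ta h1 h2 ih =>
    intro n m hc
    cases n with
    | zero => simp
    | succ n' =>
      cases m with
      | zero => simp
      | succ m' =>
        have hrec := ih n' m' (fun b' hb' a' ha' =>
          hc b' (by simp [List.take_succ_cons, hb']) a' (by simp [List.take_succ_cons, ha']))
        rw [fu, if_neg h1, if_pos h2]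
        simp only [List.take_succ_cons, QB_cons, QA_cons, Qty_cons] at *
        omega
  | case5 b B' a A' tb ta h1 h2 h2' ih =>
    intro n m hc
    cases n with
    | zero => simp
    | succ n' =>
      cases m with
      | zero => simp
      | succ m' =>
        have hrec := ih n' (m' + 1) (fun b' hb' a' ha' =>
          hc b' (by simp [List.take_succ_cons, hb']) a' ha')
        rw [fu, if_neg h1, if_neg h2, if_pos h2']
        simp only [List.take_succ_cons, QB_cons, QA_cons, Qty_cons] at *
        omega
  | case6 b B' a A' tb ta h1 h2 h2' ih =>
    intro n m hc
    cases n with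
    | zero => simp
    | succ n' =>
      cases m with
      | zero => simp
      | succ m' =>
        have hrec := ih (n' + 1) m' (fun b' hb' a' ha' =>
          hc b' hb' a' (by simp [List.take_succ_cons, ha']))
        rw [fu, if_neg h1, if_neg h2, if_neg h2']
        simp only [List.take_succ_cons, QB_cons, QA_cons, Qty_cons] at *
        omega
theorem Qty_split (b : Bid) (M : List Transaction) :
    Qty M = QtyBid b M + Qty (M.filter (fun m => ¬ m.bid = b)) := by
  induction M with
  | nil => rfl
  | cons t M ih =>
    rw [Qty_cons, QtyBid_cons, List.filter_cons]
    by_cases h : t.bid = b <;> simp [h, ih] <;> omega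

theorem QtyA_split (a : Ask) (M : List Transaction) :
    Qty M = QtyAsk a M + Qty (M.filter (fun m => ¬ m.ask = a)) := by
  induction M with
  | nil => rfl
  | cons t M ih =>
    rw [Qty_cons, QtyAsk_cons, List.filter_cons]
    by_cases h : t.ask = a <;> simp [h, ih] <;> omega

theorem QtyBid_sublist {M₁ M₂ : List Transaction} (h : M₁.Sublist M₂) (b : Bid) :
    QtyBid b M₁ ≤ QtyBid b M₂ := by
  induction h with
  | slnil => exact le_refl _
  | cons t h ih => rw [QtyBid_cons]; omega
  | cons_cons t h ih => rw [QtyBid_cons, QtyBid_cons]; omega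

theorem QtyAsk_sublist {M₁ M₂ : List Transaction} (h : M₁.Sublist M₂) (a : Ask) :
    QtyAsk a M₁ ≤ QtyAsk a M₂ := by
  induction h with
  | slnil => exact le_refl _
  | cons t h ih => rw [QtyAsk_cons]; omega
  | cons_cons t h ih => rw [QtyAsk_cons, QtyAsk_cons]; omega

theorem qty_le_QB : ∀ (B₁ : List Bid) (M : List Transaction), B₁.Nodup →
    (∀ m ∈ M, m.bid ∈ B₁) → (∀ b ∈ B₁, QtyBid b M ≤ b.quantity) → Qty M ≤ QB B₁ := by
  intro B₁
  induction B₁ with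
  | nil =>
    intro M _ hmem _
    cases M with
    | nil => simp
    | cons t M => exact absurd (hmem t (by simp)) (by simp)
  | cons b B' ih =>
    intro M hnd hmem hq
    set M₂ := M.filter (fun m => ¬ m.bid = b) with hM₂
    have hsub : M₂.Sublist M := List.filter_sublist (l := M)
    have h1 : Qty M = QtyBid b M + Qty M₂ := Qty_split b M
    have h2 : Qty M₂ ≤ QB B' := by
      refine ih M₂ hnd.of_cons (fun m hm => ?_) (fun b' hb' => le_trans (QtyBid_sublist hsub b') (hq b' (by simp [hb'])))
      have hne : ¬ m.bid = b := by
        have := List.of_mem_filter hm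
        simpa using this
      have := hmem m (hsub.mem hm)
      rcases List.mem_cons.mp this with he | h
      · exact absurd he hne
      · exact h
    have h3 := hq b (by simp)
    rw [QB_cons]; omega

theorem qty_le_QA : ∀ (A₁ : List Ask) (M : List Transaction), A₁.Nodup →
    (∀ m ∈ M, m.ask ∈ A₁) → (∀ a ∈ A₁, QtyAsk a M ≤ a.quantity) → Qty M ≤ QA A₁ := by
  intro A₁
  induction A₁ with
  | nil =>
    intro M _ hmem _
    cases M with
    | nil => simp
    | cons t M => exact absurd (hmem t (by simp)) (by simp)
  | cons a A' ih =>
    intro M hnd hmem hq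
    set M₂ := M.filter (fun m => ¬ m.ask = a) with hM₂
    have hsub : M₂.Sublist M := List.filter_sublist (l := M)
    have h1 : Qty M = QtyAsk a M + Qty M₂ := QtyA_split a M
    have h2 : Qty M₂ ≤ QA A' := by
      refine ih M₂ hnd.of_cons (fun m hm => ?_) (fun a' ha' => le_trans (QtyAsk_sublist hsub a') (hq a' (by simp [ha'])))
      have hne : ¬ m.ask = a := by
        have := List.of_mem_filter hm
        simpa using this
      have := hmem m (hsub.mem hm)
      rcases List.mem_cons.mp this with he | h
      · exact absurd he hne
      · exact h
    have h3 := hq a (by simp)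
    rw [QA_cons]; omega
@[simp] theorem Qty_replace (M : List Transaction) (p : ℕ) :
    Qty (replacePrices M p) = Qty M := by
  induction M with
  | nil => rfl
  | cons t M ih => simp [replacePrices, Qty] at *; omega

@[simp] theorem QtyBid_replace (b : Bid) (M : List Transaction) (p : ℕ) :
    QtyBid b (replacePrices M p) = QtyBid b M := by
  induction M with
  | nil => rfl
  | cons t M ih =>
    show QtyBid b ({t with price := p} :: replacePrices M p) = _
    rw [QtyBid_cons, QtyBid_cons, ih]

@[simp] theorem QtyAsk_replace (a : Ask) (M : List Transaction) (p : ℕ) :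
    QtyAsk a (replacePrices M p) = QtyAsk a M := by
  induction M with
  | nil => rfl
  | cons t M ih =>
    show QtyAsk a ({t with price := p} :: replacePrices M p) = _
    rw [QtyAsk_cons, QtyAsk_cons, ih]

theorem mem_replace {m : Transaction} {M : List Transaction} {p : ℕ}
    (h : m ∈ replacePrices M p) : ∃ m₀ ∈ M, m = {m₀ with price := p} := by
  obtain ⟨m₀, hm₀, he⟩ := List.mem_map.mp h
  exact ⟨m₀, hm₀, he.symm⟩
theorem statement_15 (B : List Bid) (A : List Ask)
    (hB : (B.map Bid.id).Nodup) (hA : (A.map Ask.id).Nodup)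
    (hsB : List.Pairwise BidGE B) (hsA : List.Pairwise AskGE A) :
    Matching B A (UM B A) ∧ IsIR (UM B A) ∧ IsUniform (UM B A) ∧
    ∀ M, Matching B A M → IsIR M → IsUniform M → Qty M ≤ Qty (UM B A) := by
  have hBnd : B.Nodup := hB.of_map
  have hAnd : A.Nodup := hA.of_map
  set F := fu B A 0 0 with hF
  set p := lastPrice F with hp
  have hUM : UM B A = replacePrices F p := rfl
  refine ⟨⟨?_, ?_, ?_, ?_, ?_⟩, ?_, ?_, ?_⟩
  · -- prices
    intro m hm
    rw [hUM] at hm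
    obtain ⟨m₀, hm₀, rfl⟩ := mem_replace hm
    exact (mem_fu _ _ _ _ m₀ hm₀).2.2.2
  · intro m hm
    rw [hUM] at hm
    obtain ⟨m₀, hm₀, rfl⟩ := mem_replace hm
    exact (mem_fu _ _ _ _ m₀ hm₀).1
  · intro m hm
    rw [hUM] at hm
    obtain ⟨m₀, hm₀, rfl⟩ := mem_replace hm
    exact (mem_fu _ _ _ _ m₀ hm₀).2.1
  · intro b hb
    rw [hUM, QtyBid_replace]
    exact (fu_qtyBid B A 0 0 hBnd).1 b hb
  · intro a ha
    rw [hUM, QtyAsk_replace]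
    exact (fu_qtyAsk B A 0 0 hAnd).1 a ha
  · -- IR
    intro m hm
    rw [hUM] at hm
    obtain ⟨m₀, hm₀, rfl⟩ := mem_replace hm
    have := fu_last B A 0 0 hsB hsA m₀ hm₀
    exact ⟨this.1, this.2⟩
  · -- uniform
    intro m1 hm1 m2 hm2
    rw [hUM] at hm1 hm2
    obtain ⟨m₁, _, rfl⟩ := mem_replace hm1
    obtain ⟨m₂, _, rfl⟩ := mem_replace hm2
    rfl
  · -- optimality
    intro M hM hIR hU
    obtain ⟨hMp, hMb, hMa, hMqb, hMqa⟩ := hM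
    cases M with
    | nil => simp
    | cons m₀ M' =>
      set M := m₀ :: M' with hMM
      set q := m₀.price with hq
      have hprice : ∀ m ∈ M, m.price = q := fun m hm => hU m hm m₀ (by simp [hMM])
      set TWB := B.takeWhile (fun b => q ≤ b.price) with hTWB
      set TWA := A.takeWhile (fun a => a.price ≤ q) with hTWA
      -- bids in M are in TWB
      have hbidmem : ∀ m ∈ M, m.bid ∈ TWB := by
        intro m hm
        have hqle : q ≤ m.bid.price := (hprice m hm) ▸ (hIR m hm).2
        have hmB := hMb m hm
        rw [← List.takeWhile_append_dropWhile (p := fun b => decide (q ≤ b.price)) (l := B)]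
          at hmB
        rcases List.mem_append.mp hmB with h | h
        · exact h
        · exfalso
          set DW := B.dropWhile (fun b => decide (q ≤ b.price)) with hDW
          have hsDW : List.Pairwise BidGE DW :=
            hsB.sublist (List.dropWhile_sublist _)
          cases hDWe : DW with
          | nil => rw [hDWe] at h; simp at h
          | cons d DW' =>
            have hd : ¬ (q ≤ d.price) := by
              have := List.head?_dropWhile_not (fun b => decide (q ≤ b.price)) B
              rw [← hDW, hDWe] at this
              simpa using this
            rw [hDWe] at h
            rcases List.mem_cons.mp h with rfl | h'
            · omega
            · rw [hDWe] at hsDW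
              have := bidGE_price ((List.pairwise_cons.mp hsDW).1 m.bid h')
              omega
      have haskmem : ∀ m ∈ M, m.ask ∈ TWA := by
        intro m hm
        have hqle : m.ask.price ≤ q := (hprice m hm) ▸ (hIR m hm).1
        have hmA := hMa m hm
        rw [← List.takeWhile_append_dropWhile (p := fun a => decide (a.price ≤ q)) (l := A)]
          at hmA
        rcases List.mem_append.mp hmA with h | h
        · exact h
        · exfalso
          set DW := A.dropWhile (fun a => decide (a.price ≤ q)) with hDW
          have hsDW : List.Pairwise AskGE DW :=
            hsA.sublist (List.dropWhile_sublist _)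
          cases hDWe : DW with
          | nil => rw [hDWe] at h; simp at h
          | cons d DW' =>
            have hd : ¬ (d.price ≤ q) := by
              have := List.head?_dropWhile_not (fun a => decide (a.price ≤ q)) A
              rw [← hDW, hDWe] at this
              simpa using this
            rw [hDWe] at h
            rcases List.mem_cons.mp h with rfl | h'
            · omega
            · rw [hDWe] at hsDW
              have := askGE_price ((List.pairwise_cons.mp hsDW).1 m.ask h')
              omega
      have hQB : Qty M ≤ QB TWB := by
        refine qty_le_QB TWB M (hBnd.sublist (List.takeWhile_sublist _)) hbidmem ?_
        exact fun b hb => hMqb b ((List.takeWhile_sublist _).mem hb)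
      have hQA : Qty M ≤ QA TWA := by
        refine qty_le_QA TWA M (hAnd.sublist (List.takeWhile_sublist _)) haskmem ?_
        exact fun a ha => hMqa a ((List.takeWhile_sublist _).mem ha)
      -- apply key lemma
      have htakeB : B.take TWB.length = TWB :=
        (List.prefix_iff_eq_take.mp (List.takeWhile_prefix _)).symm
      have htakeA : A.take TWA.length = TWA :=
        (List.prefix_iff_eq_take.mp (List.takeWhile_prefix _)).symm
      have hkey := fu_key B A 0 0 TWB.length TWA.length ?_
      · rw [htakeB, htakeA, ← hF] at hkey
        rw [hUM, Qty_replace]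
        omega
      · intro b hb a ha
        rw [htakeB] at hb; rw [htakeA] at ha
        have h1 : q ≤ b.price := by simpa using List.mem_takeWhile_imp hb
        have h2 : a.price ≤ q := by simpa using List.mem_takeWhile_imp ha
        omega
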